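/- arXiv:1105.0133 — 3 statements merged into one kernel-verified Lean document; each statement's English description precedes it below -/
import Mathlib

section
/- Let N ≥ 1, let the settings be a ∈ {0,2,4,…,2N−2} and b ∈ {1,3,5,…,2N−1}, let c range over a finite set, and let X, Y ∈ {+1,−1} and Z range over a finite set. Suppose P_{XYZ|ABC} is a family of probability distributions on triples (x,y,z) indexed by settings (a,b,c) that satisfies the non-signalling conditions: the marginal of (X,Y) given (a,b,c) does not depend on c, the marginal of (X,Z) given (a,b,c) does not depend on b, and the marginal of (Y,Z) given (a,b,c) does not depend on a. Then for all settings a, b, c and every outcome x with P(X=x|a,b,c) > 0, the variational distance between the conditional distribution P_{Z|a,b,c,X=x} and the distribution P_{Z|a,b,c} is at most I_N/2 + ν_N, where I_N is the chained-Bell quantity of the two-party marginal P_{XY|AB} and ν_N is its maximal single-party bias. -/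
noncomputable section

open Finset

/-- The two outcomes `+1` and `-1`. -/
def pm : Finset ℤ := {1, -1}

/-- Settings on side A: `{0, 2, 4, …, 2N-2}`. -/
def SA (N : ℕ) : Finset ℕ := (Finset.range N).image (fun k => 2 * k)

/-- Settings on side B: `{1, 3, 5, …, 2N-1}`. -/
def SB (N : ℕ) : Finset ℕ := (Finset.range N).image (fun k => 2 * k + 1)

section
variable {C Z : Type} [Fintype Z]

/-- Marginal distribution of `(X, Y)` given settings `(a, b, c)`. -/
def PXY (P : ℕ → ℕ → C → ℤ → ℤ → Z → ℝ) (a b : ℕ) (c : C) (x y : ℤ) : ℝ :=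
  ∑ z, P a b c x y z

/-- Marginal distribution of `X` given settings `(a, b, c)`. -/
def PX (P : ℕ → ℕ → C → ℤ → ℤ → Z → ℝ) (a b : ℕ) (c : C) (x : ℤ) : ℝ :=
  ∑ y ∈ pm, ∑ z, P a b c x y z

/-- Marginal distribution of `Z` given settings `(a, b, c)`. -/
def PZ (P : ℕ → ℕ → C → ℤ → ℤ → Z → ℝ) (a b : ℕ) (c : C) (z : Z) : ℝ :=
  ∑ x ∈ pm, ∑ y ∈ pm, P a b c x y z

/-- Conditional distribution of `Z` given settings `(a, b, c)` and outcome `X = x`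
(defined by Bayes' rule). -/
def PZcond (P : ℕ → ℕ → C → ℤ → ℤ → Z → ℝ) (a b : ℕ) (c : C) (x : ℤ)
    (z : Z) : ℝ :=
  (∑ y ∈ pm, P a b c x y z) / PX P a b c x

/-- Variational distance between two finitely supported distributions. -/
def varDist {Ω : Type} [Fintype Ω] (P Q : Ω → ℝ) : ℝ :=
  (1 / 2) * ∑ ω, |P ω - Q ω|

/-- Probability that `X = Y` given settings `(a, b, c)`. -/
def Pagree (P : ℕ → ℕ → C → ℤ → ℤ → Z → ℝ) (a b : ℕ) (c : C) : ℝ :=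
  PXY P a b c 1 1 + PXY P a b c (-1) (-1)

/-- Probability that `X ≠ Y` given settings `(a, b, c)`. -/
def Pdiff (P : ℕ → ℕ → C → ℤ → ℤ → Z → ℝ) (a b : ℕ) (c : C) : ℝ :=
  PXY P a b c 1 (-1) + PXY P a b c (-1) 1

/-- Chained-Bell quantity `I_N` of the two-party marginal, computed at setting `c`:
`I_N = P(X=Y | A=0, B=2N-1) + ∑_{a,b : |a-b|=1} P(X≠Y | A=a, B=b)`. -/
def IN (P : ℕ → ℕ → C → ℤ → ℤ → Z → ℝ) (N : ℕ) (c : C) : ℝ :=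
  Pagree P 0 (2 * N - 1) c +
    ∑ p ∈ (SA N ×ˢ SB N).filter (fun p => p.1 + 1 = p.2 ∨ p.2 + 1 = p.1),
      Pdiff P p.1 p.2 c

/-- Bias `ν_N`: the maximum over `a` of the variational distance between the marginal
distribution of `X` given setting `a` and the uniform distribution on `{+1, -1}`. -/
def biasN (P : ℕ → ℕ → C → ℤ → ℤ → Z → ℝ) (N : ℕ) (b : ℕ) (c : C) : ℝ :=
  ⨆ a ∈ SA N, (1 / 2) * (|PX P a b c 1 - 1 / 2| + |PX P a b c (-1) - 1 / 2|)

end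

lemma mem_pm_one : (1 : ℤ) ∈ pm := by norm_num [pm]
lemma mem_pm_neg_one : (-1 : ℤ) ∈ pm := by norm_num [pm]
lemma pm_cases {x : ℤ} (hx : x ∈ pm) : x = 1 ∨ x = -1 := by simpa [pm] using hx
lemma neg_mem_pm {x : ℤ} (hx : x ∈ pm) : -x ∈ pm := by
  rcases pm_cases hx with rfl | rfl <;> norm_num [pm]
lemma sum_pm_eq {x : ℤ} (hx : x ∈ pm) (f : ℤ → ℝ) :
    ∑ y ∈ pm, f y = f x + f (-x) := by
  have h : ∑ y ∈ pm, f y = f 1 + f (-1) :=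
    Finset.sum_pair (by norm_num : (1 : ℤ) ≠ -1)
  rcases pm_cases hx with rfl | rfl
  · simpa using h
  · rw [h]; norm_num; ring
lemma mem_SA {N s : ℕ} : s ∈ SA N ↔ s % 2 = 0 ∧ s < 2 * N := by
  simp only [SA, Finset.mem_image, Finset.mem_range]
  constructor
  · rintro ⟨k, hk, rfl⟩; omega
  · rintro ⟨h1, h2⟩; exact ⟨s / 2, by omega, by omega⟩
lemma mem_SB {N s : ℕ} : s ∈ SB N ↔ s % 2 = 1 ∧ s < 2 * N := by
  simp only [SB, Finset.mem_image, Finset.mem_range]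
  constructor
  · rintro ⟨k, hk, rfl⟩; omega
  · rintro ⟨h1, h2⟩; exact ⟨s / 2, by omega, by omega⟩


section
variable {C Z : Type} [Fintype Z]

/-- Node of the chain: at even setting `s` it is the (unnormalised) distribution of `Z`
together with `X = x`; at odd setting `s` it is the one together with `Y = x`. -/
def node (P : ℕ → ℕ → C → ℤ → ℤ → Z → ℝ) (c : C) (x : ℤ) (s : ℕ) (z : Z) : ℝ :=
  if s % 2 = 0 then ∑ y ∈ pm, P s 1 c x y z else ∑ x' ∈ pm, P 0 s c x' x z

/-- Bound used for the edge from `k` to `k+1` (or the closing "agree" edge). -/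
def edgeBound (P : ℕ → ℕ → C → ℤ → ℤ → Z → ℝ) (N : ℕ) (c : C) (k : ℕ) : ℝ :=
  if k = 2 * N - 1 then Pagree P 0 (2 * N - 1) c
  else if k % 2 = 0 then Pdiff P k (k + 1) c else Pdiff P (k + 1) k c

variable {N : ℕ} {P : ℕ → ℕ → C → ℤ → ℤ → Z → ℝ}

lemma edge_diff (hN : 1 ≤ N)
    (hpos : ∀ a ∈ SA N, ∀ b ∈ SB N, ∀ (c : C), ∀ x ∈ pm, ∀ y ∈ pm, ∀ z : Z,
      0 ≤ P a b c x y z)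
    (hNS2 : ∀ a ∈ SA N, ∀ b ∈ SB N, ∀ b' ∈ SB N, ∀ (c : C), ∀ x ∈ pm, ∀ z : Z,
      ∑ y ∈ pm, P a b c x y z = ∑ y ∈ pm, P a b' c x y z)
    (hNS3 : ∀ a ∈ SA N, ∀ a' ∈ SA N, ∀ b ∈ SB N, ∀ (c : C), ∀ y ∈ pm, ∀ z : Z,
      ∑ x ∈ pm, P a b c x y z = ∑ x ∈ pm, P a' b c x y z)
    (c : C) {x : ℤ} (hx : x ∈ pm) {s : ℕ} (hs : s + 1 ≤ 2 * N - 1) :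
    ∑ z, |node P c x s z - node P c x (s + 1) z| ≤ edgeBound P N c s := by
  have hnx := neg_mem_pm hx
  have h1B : (1 : ℕ) ∈ SB N := mem_SB.mpr ⟨by norm_num, by omega⟩
  have h0A : (0 : ℕ) ∈ SA N := mem_SA.mpr ⟨by norm_num, by omega⟩
  rw [edgeBound, if_neg (by omega : ¬ s = 2 * N - 1)]
  by_cases hpar : s % 2 = 0
  · -- even s : μ-node at s, λ-node at s+1; move both to settings (s, s+1)
    have hsA : s ∈ SA N := mem_SA.mpr ⟨hpar, by omega⟩
    have hs1B : s + 1 ∈ SB N := mem_SB.mpr ⟨by omega, by omega⟩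
    rw [if_pos hpar]
    calc ∑ z, |node P c x s z - node P c x (s + 1) z|
        = ∑ z, |P s (s+1) c x (-x) z - P s (s+1) c (-x) x z| := by
          refine Finset.sum_congr rfl fun z _ => ?_
          rw [node, node, if_pos hpar, if_neg (by omega : ¬ (s+1) % 2 = 0),
            hNS2 s hsA 1 h1B (s+1) hs1B c x hx z,
            hNS3 0 h0A s hsA (s+1) hs1B c x hx z,
            sum_pm_eq hx (fun y => P s (s+1) c x y z),
            sum_pm_eq hx (fun x' => P s (s+1) c x' x z)]
          congr 1; ring
      _ ≤ ∑ z, (P s (s+1) c x (-x) z + P s (s+1) c (-x) x z) := by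
          refine Finset.sum_le_sum fun z _ => ?_
          have h1 := hpos s hsA (s+1) hs1B c x hx (-x) hnx z
          have h2 := hpos s hsA (s+1) hs1B c (-x) hnx x hx z
          exact abs_le.mpr ⟨by linarith, by linarith⟩
      _ = PXY P s (s+1) c x (-x) + PXY P s (s+1) c (-x) x := Finset.sum_add_distrib
      _ ≤ Pdiff P s (s+1) c := by
          rcases pm_cases hx with rfl | rfl <;> norm_num [Pdiff] <;> linarith
  · -- odd s : λ-node at s, μ-node at s+1; move both to settings (s+1, s)
    have hsB : s ∈ SB N := mem_SB.mpr ⟨by omega, by omega⟩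
    have hs1A : s + 1 ∈ SA N := mem_SA.mpr ⟨by omega, by omega⟩
    rw [if_neg hpar]
    calc ∑ z, |node P c x s z - node P c x (s + 1) z|
        = ∑ z, |P (s+1) s c (-x) x z - P (s+1) s c x (-x) z| := by
          refine Finset.sum_congr rfl fun z _ => ?_
          rw [node, node, if_neg hpar, if_pos (by omega : (s+1) % 2 = 0),
            hNS3 0 h0A (s+1) hs1A s hsB c x hx z,
            hNS2 (s+1) hs1A 1 h1B s hsB c x hx z,
            sum_pm_eq hx (fun x' => P (s+1) s c x' x z),
            sum_pm_eq hx (fun y => P (s+1) s c x y z)]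
          congr 1; ring
      _ ≤ ∑ z, (P (s+1) s c (-x) x z + P (s+1) s c x (-x) z) := by
          refine Finset.sum_le_sum fun z _ => ?_
          have h1 := hpos (s+1) hs1A s hsB c (-x) hnx x hx z
          have h2 := hpos (s+1) hs1A s hsB c x hx (-x) hnx z
          exact abs_le.mpr ⟨by linarith, by linarith⟩
      _ = PXY P (s+1) s c (-x) x + PXY P (s+1) s c x (-x) := Finset.sum_add_distrib
      _ ≤ Pdiff P (s+1) s c := by
          rcases pm_cases hx with rfl | rfl <;> norm_num [Pdiff] <;> linarith

lemma edge_agree (hN : 1 ≤ N)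
    (hpos : ∀ a ∈ SA N, ∀ b ∈ SB N, ∀ (c : C), ∀ x ∈ pm, ∀ y ∈ pm, ∀ z : Z,
      0 ≤ P a b c x y z)
    (hNS2 : ∀ a ∈ SA N, ∀ b ∈ SB N, ∀ b' ∈ SB N, ∀ (c : C), ∀ x ∈ pm, ∀ z : Z,
      ∑ y ∈ pm, P a b c x y z = ∑ y ∈ pm, P a b' c x y z)
    (c : C) {x : ℤ} (hx : x ∈ pm) :
    ∑ z, |node P c x (2 * N - 1) z - node P c (-x) 0 z| ≤ Pagree P 0 (2 * N - 1) c := by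
  have hnx := neg_mem_pm hx
  have h1B : (1 : ℕ) ∈ SB N := mem_SB.mpr ⟨by norm_num, by omega⟩
  have h0A : (0 : ℕ) ∈ SA N := mem_SA.mpr ⟨by norm_num, by omega⟩
  have htB : 2 * N - 1 ∈ SB N := mem_SB.mpr ⟨by omega, by omega⟩
  calc ∑ z, |node P c x (2 * N - 1) z - node P c (-x) 0 z|
      = ∑ z, |P 0 (2*N-1) c x x z - P 0 (2*N-1) c (-x) (-x) z| := by
        refine Finset.sum_congr rfl fun z _ => ?_
        rw [node, node, if_neg (by omega : ¬ (2 * N - 1) % 2 = 0),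
          if_pos (by norm_num : (0:ℕ) % 2 = 0),
          hNS2 0 h0A 1 h1B (2*N-1) htB c (-x) hnx z,
          sum_pm_eq hx (fun x' => P 0 (2*N-1) c x' x z),
          sum_pm_eq hx (fun y => P 0 (2*N-1) c (-x) y z)]
        congr 1; ring
    _ ≤ ∑ z, (P 0 (2*N-1) c x x z + P 0 (2*N-1) c (-x) (-x) z) := by
        refine Finset.sum_le_sum fun z _ => ?_
        have h1 := hpos 0 h0A (2*N-1) htB c x hx x hx z
        have h2 := hpos 0 h0A (2*N-1) htB c (-x) hnx (-x) hnx z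
        exact abs_le.mpr ⟨by linarith, by linarith⟩
    _ = PXY P 0 (2*N-1) c x x + PXY P 0 (2*N-1) c (-x) (-x) := Finset.sum_add_distrib
    _ ≤ Pagree P 0 (2*N-1) c := by
        rcases pm_cases hx with rfl | rfl <;> norm_num [Pagree] <;> linarith

end


lemma telescope {Z : Type} [Fintype Z] (f : ℕ → Z → ℝ) :
    ∀ n, ∑ z, |f 0 z - f n z| ≤ ∑ j ∈ Finset.range n, ∑ z, |f j z - f (j + 1) z| := by
  intro n
  induction n with
  | zero => simp
  | succ n ih =>
    calc ∑ z, |f 0 z - f (n + 1) z|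
        ≤ ∑ z, (|f 0 z - f n z| + |f n z - f (n + 1) z|) :=
          Finset.sum_le_sum fun z _ => abs_sub_le _ _ _
      _ = (∑ z, |f 0 z - f n z|) + ∑ z, |f n z - f (n + 1) z| := Finset.sum_add_distrib
      _ ≤ _ := by rw [Finset.sum_range_succ]; linarith


section
variable {C Z : Type} [Fintype Z]
variable {N : ℕ} {P : ℕ → ℕ → C → ℤ → ℤ → Z → ℝ}

/-- The sum of all edge bounds equals `I_N`. -/
lemma sum_edgeBound (hN : 1 ≤ N) (c : C) :
    ∑ k ∈ Finset.range (2 * N), edgeBound P N c k = IN P N c := by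
  have h2N : 2 * N = (2 * N - 1) + 1 := by omega
  rw [h2N, Finset.sum_range_succ, IN]
  have h1 : edgeBound P N c (2 * N - 1) = Pagree P 0 (2 * N - 1) c := by
    rw [edgeBound, if_pos rfl]
  have h2 : ∑ k ∈ Finset.range (2 * N - 1), edgeBound P N c k
      = ∑ p ∈ (SA N ×ˢ SB N).filter (fun p => p.1 + 1 = p.2 ∨ p.2 + 1 = p.1),
          Pdiff P p.1 p.2 c := by
    refine Finset.sum_nbij' (i := fun k => if k % 2 = 0 then ((k, k + 1) : ℕ × ℕ) else (k + 1, k))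
      (j := fun p => if p.1 + 1 = p.2 then p.1 else p.2) ?_ ?_ ?_ ?_ ?_
    · intro k hk
      rw [Finset.mem_range] at hk
      by_cases h : k % 2 = 0
      · rw [if_pos h]
        simp only [Finset.mem_filter, Finset.mem_product]
        exact ⟨⟨mem_SA.mpr ⟨h, by omega⟩, mem_SB.mpr ⟨by omega, by omega⟩⟩, by simp⟩
      · rw [if_neg h]
        simp only [Finset.mem_filter, Finset.mem_product]
        exact ⟨⟨mem_SA.mpr ⟨by omega, by omega⟩, mem_SB.mpr ⟨by omega, by omega⟩⟩, by simp⟩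
    · intro p hp
      simp only [Finset.mem_filter, Finset.mem_product, mem_SA, mem_SB] at hp
      obtain ⟨⟨⟨hp1, hp1'⟩, ⟨hp2, hp2'⟩⟩, hadj⟩ := hp
      rw [Finset.mem_range]
      rcases hadj with h | h
      · rw [if_pos h]; omega
      · rw [if_neg (by omega)]; omega
    · intro k hk
      rw [Finset.mem_range] at hk
      by_cases h : k % 2 = 0
      · rw [if_pos h]; simp
      · rw [if_neg h]; dsimp only; rw [if_neg (by omega)]
    · intro p hp
      simp only [Finset.mem_filter, Finset.mem_product, mem_SA, mem_SB] at hp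
      obtain ⟨p1, p2⟩ := p
      obtain ⟨⟨⟨hp1, hp1'⟩, ⟨hp2, hp2'⟩⟩, hadj⟩ := hp
      dsimp only at *
      rcases hadj with h | h
      · rw [if_pos h, if_pos hp1, h]
      · rw [if_neg (show ¬ p1 + 1 = p2 by omega), if_neg (show ¬ p2 % 2 = 0 by omega), h]
    · intro k hk
      rw [Finset.mem_range] at hk
      rw [edgeBound, if_neg (by omega : ¬ k = 2 * N - 1)]
      by_cases h : k % 2 = 0
      · rw [if_pos h, if_pos h]
      · rw [if_neg h, if_neg h]
  rw [h1, h2, add_comm]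

/-- The chained-Bell bound: the two unnormalised conditional distributions of `Z`
at any setting `a` differ by at most `I_N`. -/
lemma chain (hN : 1 ≤ N)
    (hpos : ∀ a ∈ SA N, ∀ b ∈ SB N, ∀ (c : C), ∀ x ∈ pm, ∀ y ∈ pm, ∀ z : Z,
      0 ≤ P a b c x y z)
    (hNS2 : ∀ a ∈ SA N, ∀ b ∈ SB N, ∀ b' ∈ SB N, ∀ (c : C), ∀ x ∈ pm, ∀ z : Z,
      ∑ y ∈ pm, P a b c x y z = ∑ y ∈ pm, P a b' c x y z)
    (hNS3 : ∀ a ∈ SA N, ∀ a' ∈ SA N, ∀ b ∈ SB N, ∀ (c : C), ∀ y ∈ pm, ∀ z : Z,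
      ∑ x ∈ pm, P a b c x y z = ∑ x ∈ pm, P a' b c x y z)
    (c : C) {x : ℤ} (hx : x ∈ pm) {a : ℕ} (ha : a ∈ SA N) :
    ∑ z, |node P c x a z - node P c (-x) a z| ≤ IN P N c := by
  obtain ⟨ha2, haN⟩ := mem_SA.mp ha
  have key := telescope (fun j z =>
    if a + j < 2 * N then node P c x (a + j) z else node P c (-x) (a + j - 2 * N) z) (2 * N)
  have e0 : ∑ z, |node P c x a z - node P c (-x) a z|
      = ∑ z, |(if a + 0 < 2 * N then node P c x (a + 0) z else node P c (-x) (a + 0 - 2 * N) z)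
          - (if a + 2 * N < 2 * N then node P c x (a + 2 * N) z
             else node P c (-x) (a + 2 * N - 2 * N) z)| := by
    refine Finset.sum_congr rfl fun z _ => ?_
    rw [if_pos (by omega : a + 0 < 2 * N), if_neg (by omega : ¬ a + 2 * N < 2 * N),
      (by omega : a + 0 = a), (by omega : a + 2 * N - 2 * N = a)]
  rw [e0]
  refine le_trans key (le_trans (Finset.sum_le_sum (g := fun j =>
      edgeBound P N c (if a + j < 2 * N then a + j else a + j - 2 * N)) fun j hj => ?_) ?_)
  · rw [Finset.mem_range] at hj
    by_cases h1 : a + j < 2 * N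
    · rw [if_pos h1]
      by_cases h2 : a + j = 2 * N - 1
      · -- agree edge
        have hcalc : ∑ z, |(if a + j < 2 * N then node P c x (a + j) z
              else node P c (-x) (a + j - 2 * N) z)
            - (if a + (j + 1) < 2 * N then node P c x (a + (j + 1)) z
              else node P c (-x) (a + (j + 1) - 2 * N) z)|
            = ∑ z, |node P c x (2 * N - 1) z - node P c (-x) 0 z| := by
          refine Finset.sum_congr rfl fun z _ => ?_
          rw [if_pos h1, if_neg (by omega : ¬ a + (j + 1) < 2 * N), h2,
            (by omega : a + (j + 1) - 2 * N = 0)]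
        rw [hcalc, h2, edgeBound, if_pos rfl]
        exact edge_agree hN hpos hNS2 c hx
      · -- ordinary edge on the x side
        have hcalc : ∑ z, |(if a + j < 2 * N then node P c x (a + j) z
              else node P c (-x) (a + j - 2 * N) z)
            - (if a + (j + 1) < 2 * N then node P c x (a + (j + 1)) z
              else node P c (-x) (a + (j + 1) - 2 * N) z)|
            = ∑ z, |node P c x (a + j) z - node P c x ((a + j) + 1) z| := by
          refine Finset.sum_congr rfl fun z _ => ?_
          rw [if_pos h1, if_pos (by omega : a + (j + 1) < 2 * N),
            (by omega : a + (j + 1) = (a + j) + 1)]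
        rw [hcalc]
        exact edge_diff hN hpos hNS2 hNS3 c hx (by omega : (a + j) + 1 ≤ 2 * N - 1)
    · -- edge on the -x side
      rw [if_neg h1]
      have hcalc : ∑ z, |(if a + j < 2 * N then node P c x (a + j) z
            else node P c (-x) (a + j - 2 * N) z)
          - (if a + (j + 1) < 2 * N then node P c x (a + (j + 1)) z
            else node P c (-x) (a + (j + 1) - 2 * N) z)|
          = ∑ z, |node P c (-x) (a + j - 2 * N) z - node P c (-x) ((a + j - 2 * N) + 1) z| := by
        refine Finset.sum_congr rfl fun z _ => ?_
        rw [if_neg h1, if_neg (by omega : ¬ a + (j + 1) < 2 * N),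
          (by omega : a + (j + 1) - 2 * N = (a + j - 2 * N) + 1)]
      rw [hcalc]
      exact edge_diff hN hpos hNS2 hNS3 c (neg_mem_pm hx)
        (by omega : (a + j - 2 * N) + 1 ≤ 2 * N - 1)
  · -- reindex the edge bounds around the circle
    have hre : ∑ j ∈ Finset.range (2 * N),
        edgeBound P N c (if a + j < 2 * N then a + j else a + j - 2 * N)
        = ∑ k ∈ Finset.range (2 * N), edgeBound P N c k := by
      refine Finset.sum_nbij' (i := fun j => if a + j < 2 * N then a + j else a + j - 2 * N)
        (j := fun k => if k < a then k + 2 * N - a else k - a) ?_ ?_ ?_ ?_ ?_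
      · intro j hj; rw [Finset.mem_range] at hj ⊢; split <;> omega
      · intro k hk; rw [Finset.mem_range] at hk ⊢; split <;> omega
      · intro j hj; rw [Finset.mem_range] at hj; split <;> split <;> omega
      · intro k hk; rw [Finset.mem_range] at hk; split <;> split <;> omega
      · intro j _; rfl
    rw [hre, sum_edgeBound hN]
end


section
variable {C Z : Type} [Fintype Z]
variable {N : ℕ} {P : ℕ → ℕ → C → ℤ → ℤ → Z → ℝ}

lemma PX_indep
    (hNS1 : ∀ a ∈ SA N, ∀ b ∈ SB N, ∀ (c c' : C), ∀ x ∈ pm, ∀ y ∈ pm,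
      PXY P a b c x y = PXY P a b c' x y)
    (hNS2 : ∀ a ∈ SA N, ∀ b ∈ SB N, ∀ b' ∈ SB N, ∀ (c : C), ∀ x ∈ pm, ∀ z : Z,
      ∑ y ∈ pm, P a b c x y z = ∑ y ∈ pm, P a b' c x y z)
    {a : ℕ} (ha : a ∈ SA N) {b b' : ℕ} (hb : b ∈ SB N) (hb' : b' ∈ SB N) (c c' : C)
    {x : ℤ} (hx : x ∈ pm) :
    PX P a b c x = PX P a b' c' x := by
  have h1 : PX P a b c x = PX P a b c' x := by
    rw [PX, PX]
    exact Finset.sum_congr rfl fun y hy => hNS1 a ha b hb c c' x hx y hy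
  rw [h1, PX, PX, Finset.sum_comm, Finset.sum_comm (s := pm)]
  exact Finset.sum_congr rfl fun z _ => hNS2 a ha b hb b' hb' c' x hx z

lemma IN_indep (hN : 1 ≤ N)
    (hNS1 : ∀ a ∈ SA N, ∀ b ∈ SB N, ∀ (c c' : C), ∀ x ∈ pm, ∀ y ∈ pm,
      PXY P a b c x y = PXY P a b c' x y)
    (c c' : C) : IN P N c = IN P N c' := by
  have h0A : (0 : ℕ) ∈ SA N := mem_SA.mpr ⟨by norm_num, by omega⟩
  have htB : 2 * N - 1 ∈ SB N := mem_SB.mpr ⟨by omega, by omega⟩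
  rw [IN, IN]
  congr 1
  · rw [Pagree, Pagree,
      hNS1 0 h0A (2*N-1) htB c c' 1 mem_pm_one 1 mem_pm_one,
      hNS1 0 h0A (2*N-1) htB c c' (-1) mem_pm_neg_one (-1) mem_pm_neg_one]
  · refine Finset.sum_congr rfl fun p hp => ?_
    simp only [Finset.mem_filter, Finset.mem_product] at hp
    obtain ⟨⟨hp1, hp2⟩, _⟩ := hp
    rw [Pdiff, Pdiff,
      hNS1 p.1 hp1 p.2 hp2 c c' 1 mem_pm_one (-1) mem_pm_neg_one,
      hNS1 p.1 hp1 p.2 hp2 c c' (-1) mem_pm_neg_one 1 mem_pm_one]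

lemma le_biasN
    (hpos : ∀ a ∈ SA N, ∀ b ∈ SB N, ∀ (c : C), ∀ x ∈ pm, ∀ y ∈ pm, ∀ z : Z,
      0 ≤ P a b c x y z)
    (hsum : ∀ a ∈ SA N, ∀ b ∈ SB N, ∀ c : C,
      ∑ x ∈ pm, ∑ y ∈ pm, ∑ z, P a b c x y z = 1)
    {a : ℕ} (ha : a ∈ SA N) {b₀ : ℕ} (hb₀ : b₀ ∈ SB N) (c₀ : C) :
    (1 / 2) * (|PX P a b₀ c₀ 1 - 1 / 2| + |PX P a b₀ c₀ (-1) - 1 / 2|) ≤ biasN P N b₀ c₀ := by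
  have hval : ∀ a' ∈ SA N,
      (1 / 2) * (|PX P a' b₀ c₀ 1 - 1 / 2| + |PX P a' b₀ c₀ (-1) - 1 / 2|) ≤ (1/2 : ℝ) := by
    intro a' ha'
    have hpx : ∀ x ∈ pm, 0 ≤ PX P a' b₀ c₀ x := by
      intro x hx
      refine Finset.sum_nonneg fun y hy => Finset.sum_nonneg fun z _ =>
        hpos a' ha' b₀ hb₀ c₀ x hx y hy z
    have hsum1 : PX P a' b₀ c₀ 1 + PX P a' b₀ c₀ (-1) = 1 := by
      have h := hsum a' ha' b₀ hb₀ c₀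
      rw [sum_pm_eq mem_pm_one (fun x => ∑ y ∈ pm, ∑ z, P a' b₀ c₀ x y z)] at h
      simpa [PX] using h
    have h1 := hpx 1 mem_pm_one
    have h2 := hpx (-1) mem_pm_neg_one
    have e1 : |PX P a' b₀ c₀ 1 - 1 / 2| ≤ 1 / 2 := abs_le.mpr ⟨by linarith, by linarith⟩
    have e2 : |PX P a' b₀ c₀ (-1) - 1 / 2| ≤ 1 / 2 := abs_le.mpr ⟨by linarith, by linarith⟩
    linarith
  have hbdd : BddAbove (Set.range fun a' =>
      ⨆ _ : a' ∈ SA N, (1 / 2) * (|PX P a' b₀ c₀ 1 - 1 / 2| + |PX P a' b₀ c₀ (-1) - 1 / 2|)) := by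
    refine ⟨1/2, ?_⟩
    rintro v ⟨a', rfl⟩
    dsimp only
    by_cases h : a' ∈ SA N
    · rw [ciSup_pos h]
      exact hval a' h
    · have : IsEmpty (a' ∈ SA N) := ⟨h⟩
      rw [Real.iSup_of_isEmpty]
      norm_num
  have h' := le_ciSup hbdd a
  rwa [ciSup_pos ha] at h'

end


/-- For any non-signalling family of distributions `P_{XYZ|ABC}`, the
variational distance between `P_{Z|a,b,c,X=x}` and `P_{Z|a,b,c}` is at most
`I_N/2 + ν_N`. -/
theorem statement0 {C Z : Type} [Fintype Z] (N : ℕ) (hN : 1 ≤ N)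
    (P : ℕ → ℕ → C → ℤ → ℤ → Z → ℝ)
    (hpos : ∀ a ∈ SA N, ∀ b ∈ SB N, ∀ (c : C), ∀ x ∈ pm, ∀ y ∈ pm, ∀ z : Z,
      0 ≤ P a b c x y z)
    (hsum : ∀ a ∈ SA N, ∀ b ∈ SB N, ∀ c : C,
      ∑ x ∈ pm, ∑ y ∈ pm, ∑ z, P a b c x y z = 1)
    (hNS1 : ∀ a ∈ SA N, ∀ b ∈ SB N, ∀ (c c' : C), ∀ x ∈ pm, ∀ y ∈ pm,
      PXY P a b c x y = PXY P a b c' x y)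
    (hNS2 : ∀ a ∈ SA N, ∀ b ∈ SB N, ∀ b' ∈ SB N, ∀ (c : C), ∀ x ∈ pm, ∀ z : Z,
      ∑ y ∈ pm, P a b c x y z = ∑ y ∈ pm, P a b' c x y z)
    (hNS3 : ∀ a ∈ SA N, ∀ a' ∈ SA N, ∀ b ∈ SB N, ∀ (c : C), ∀ y ∈ pm, ∀ z : Z,
      ∑ x ∈ pm, P a b c x y z = ∑ x ∈ pm, P a' b c x y z) :
    ∀ a ∈ SA N, ∀ b ∈ SB N, ∀ c : C, ∀ x ∈ pm, 0 < PX P a b c x →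
      ∀ b₀ ∈ SB N, ∀ c₀ : C,
        varDist (PZcond P a b c x) (PZ P a b c) ≤ IN P N c₀ / 2 + biasN P N b₀ c₀ := by
  intro a ha b hb c x hx hp b₀ hb₀ c₀
  obtain ⟨ha2, haN⟩ := mem_SA.mp ha
  have hnx := neg_mem_pm hx
  have h1B : (1 : ℕ) ∈ SB N := mem_SB.mpr ⟨by norm_num, by omega⟩
  set p := PX P a b c x with hpdef
  -- the chained-Bell bound for the two unnormalised conditional distributions of Z
  have hchain : ∑ z, |(∑ y ∈ pm, P a b c x y z) - (∑ y ∈ pm, P a b c (-x) y z)|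
      ≤ IN P N c₀ := by
    calc ∑ z, |(∑ y ∈ pm, P a b c x y z) - (∑ y ∈ pm, P a b c (-x) y z)|
        = ∑ z, |node P c x a z - node P c (-x) a z| := by
          refine Finset.sum_congr rfl fun z _ => ?_
          rw [node, node, if_pos ha2, if_pos ha2,
            hNS2 a ha b hb 1 h1B c x hx z, hNS2 a ha b hb 1 h1B c (-x) hnx z]
      _ ≤ IN P N c := chain hN hpos hNS2 hNS3 c hx ha
      _ = IN P N c₀ := IN_indep hN hNS1 c c₀
  have hn1 : ∀ z : Z, 0 ≤ ∑ y ∈ pm, P a b c x y z := fun z =>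
    Finset.sum_nonneg fun y hy => hpos a ha b hb c x hx y hy z
  have hP1 : ∑ z, ∑ y ∈ pm, P a b c x y z = p := by
    rw [hpdef, PX, Finset.sum_comm]
  -- pointwise decomposition and summation
  have hkey : ∑ z, |PZcond P a b c x z - PZ P a b c z| ≤ IN P N c₀ + |1 - 2 * p| := by
    have hstep : ∀ z : Z, |PZcond P a b c x z - PZ P a b c z| ≤
        |(∑ y ∈ pm, P a b c x y z) - (∑ y ∈ pm, P a b c (-x) y z)|
          + (|1 - 2 * p| / p) * (∑ y ∈ pm, P a b c x y z) := by
      intro z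
      have hPZ : PZ P a b c z
          = (∑ y ∈ pm, P a b c x y z) + (∑ y ∈ pm, P a b c (-x) y z) := by
        rw [PZ, sum_pm_eq hx (fun x' => ∑ y ∈ pm, P a b c x' y z)]
      rw [PZcond, hPZ, ← hpdef]
      have hdecomp : (∑ y ∈ pm, P a b c x y z) / p
          - ((∑ y ∈ pm, P a b c x y z) + (∑ y ∈ pm, P a b c (-x) y z))
          = ((∑ y ∈ pm, P a b c x y z) - (∑ y ∈ pm, P a b c (-x) y z))
            + ((1 - 2 * p) / p) * (∑ y ∈ pm, P a b c x y z) := by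
        field_simp
        ring
      rw [hdecomp]
      refine le_trans (abs_add_le _ _) ?_
      have habs : |((1 - 2 * p) / p) * (∑ y ∈ pm, P a b c x y z)|
          = (|1 - 2 * p| / p) * (∑ y ∈ pm, P a b c x y z) := by
        rw [abs_mul, abs_div, abs_of_pos hp, abs_of_nonneg (hn1 z)]
      rw [habs]
    calc ∑ z, |PZcond P a b c x z - PZ P a b c z|
        ≤ ∑ z, (|(∑ y ∈ pm, P a b c x y z) - (∑ y ∈ pm, P a b c (-x) y z)|
            + (|1 - 2 * p| / p) * (∑ y ∈ pm, P a b c x y z)) :=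
          Finset.sum_le_sum fun z _ => hstep z
      _ = (∑ z, |(∑ y ∈ pm, P a b c x y z) - (∑ y ∈ pm, P a b c (-x) y z)|)
            + (|1 - 2 * p| / p) * p := by
          rw [Finset.sum_add_distrib, ← Finset.mul_sum, hP1]
      _ ≤ IN P N c₀ + |1 - 2 * p| := by
          rw [div_mul_cancel₀ _ (ne_of_gt hp)]
          linarith [hchain]
  -- the bias term
  have hsum1 : PX P a b c 1 + PX P a b c (-1) = 1 := by
    have h := hsum a ha b hb c
    rw [sum_pm_eq mem_pm_one (fun x' => ∑ y ∈ pm, ∑ z, P a b c x' y z)] at h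
    simpa [PX] using h
  have hb1 : PX P a b₀ c₀ 1 = PX P a b c 1 :=
    (PX_indep hNS1 hNS2 ha hb hb₀ c c₀ mem_pm_one).symm
  have hb2 : PX P a b₀ c₀ (-1) = PX P a b c (-1) :=
    (PX_indep hNS1 hNS2 ha hb hb₀ c c₀ mem_pm_neg_one).symm
  have hbias : |1 - 2 * p|
      = 2 * ((1 / 2) * (|PX P a b₀ c₀ 1 - 1 / 2| + |PX P a b₀ c₀ (-1) - 1 / 2|)) := by
    rw [hb1, hb2]
    have h2 : |1 - 2 * p| = 2 * |p - 1/2| := by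
      rw [show (1 : ℝ) - 2 * p = (-2) * (p - 1/2) by ring, abs_mul]
      norm_num
    rcases pm_cases hx with hx1 | hx1
    · have hpp : p = PX P a b c 1 := by rw [hpdef, hx1]
      have e2 : PX P a b c (-1) - 1/2 = -(p - 1/2) := by rw [hpp]; linarith
      rw [e2, abs_neg, ← hpp, h2]; ring
    · have hpp : p = PX P a b c (-1) := by rw [hpdef, hx1]
      have e2 : PX P a b c 1 - 1/2 = -(p - 1/2) := by rw [hpp]; linarith
      rw [e2, abs_neg, ← hpp, h2]; ring
  have hble := le_biasN hpos hsum ha hb₀ c₀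
  rw [varDist]
  rw [hbias] at hkey
  linarith
end
end

section
/- Let P be a probability distribution on pairs (x,z) with x ∈ {+1,−1} and z in a finite set, let P_X and P_Z be its marginals, and fix x with P_X(x) > 0. Then the variational distance between the conditional distribution P_{Z|X=x} (defined by P_{Z|X=x}(z) = P(x,z)/P_X(x)) and the marginal P_Z satisfies D(P_{Z|X=x}, P_Z) ≤ |P_X(x) − 1/2| + Σ_z |P(x,z) − (1/2)·P_Z(z)|. -/
open Finset

/-- For a probability distribution `P` on pairs `(x, z)` with
`x ∈ {+1,-1}` and `z` in a finite set, with marginals `P_X` and `P_Z`, and any `x` with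
`P_X(x) > 0`, the variational distance between the conditional distribution `P_{Z|X=x}`
and the marginal `P_Z` satisfies
`D(P_{Z|X=x}, P_Z) ≤ |P_X(x) - 1/2| + ∑_z |P(x,z) - (1/2)·P_Z(z)|`. -/
theorem statement5 {Z : Type} [Fintype Z]
    (P : ℤ → Z → ℝ)
    (hpos : ∀ x ∈ pm, ∀ z : Z, 0 ≤ P x z)
    (hsum : ∑ x ∈ pm, ∑ z, P x z = 1)
    (x : ℤ) (hx : x ∈ pm)
    (hPX : 0 < ∑ z, P x z) :
    (1 / 2) * ∑ z, |P x z / (∑ z', P x z') - (∑ x' ∈ pm, P x' z)| ≤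
      |(∑ z, P x z) - 1 / 2| + ∑ z, |P x z - (1 / 2) * (∑ x' ∈ pm, P x' z)| := by
  set a : ℝ := ∑ z, P x z with ha
  have hP : ∀ z : Z, 0 ≤ P x z := hpos x hx
  have key : ∀ z : Z, |P x z / a - (∑ x' ∈ pm, P x' z)| ≤
      P x z * |1 / a - 2| + 2 * |P x z - (1 / 2) * (∑ x' ∈ pm, P x' z)| := by
    intro z
    have h1 : |P x z / a - (∑ x' ∈ pm, P x' z)| ≤
        |P x z / a - 2 * P x z| + |2 * P x z - (∑ x' ∈ pm, P x' z)| :=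
      abs_sub_le _ _ _
    have h2 : |P x z / a - 2 * P x z| = P x z * |1 / a - 2| := by
      have e : P x z / a - 2 * P x z = P x z * (1 / a - 2) := by ring
      rw [e, abs_mul, abs_of_nonneg (hP z)]
    have h3 : |2 * P x z - (∑ x' ∈ pm, P x' z)| =
        2 * |P x z - (1 / 2) * (∑ x' ∈ pm, P x' z)| := by
      have e : 2 * P x z - (∑ x' ∈ pm, P x' z) =
          2 * (P x z - (1 / 2) * (∑ x' ∈ pm, P x' z)) := by ring
      rw [e, abs_mul, abs_two]
    rw [h2, h3] at h1; exact h1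
  have hsum1 : ∑ z, (P x z * |1 / a - 2| + 2 * |P x z - (1 / 2) * (∑ x' ∈ pm, P x' z)|)
      = a * |1 / a - 2| + 2 * ∑ z, |P x z - (1 / 2) * (∑ x' ∈ pm, P x' z)| := by
    rw [Finset.sum_add_distrib, ← Finset.sum_mul, ← Finset.mul_sum]
  have ha2 : a * |1 / a - 2| = 2 * |a - 1 / 2| := by
    have e : a * (1 / a - 2) = -(2 * (a - 1 / 2)) := by
      field_simp
      ring
    have e2 : a * |1 / a - 2| = |a * (1 / a - 2)| := by
      rw [abs_mul, abs_of_pos hPX]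
    rw [e2, e, abs_neg, abs_mul, abs_two]
  have hle : ∑ z, |P x z / a - (∑ x' ∈ pm, P x' z)| ≤
      a * |1 / a - 2| + 2 * ∑ z, |P x z - (1 / 2) * (∑ x' ∈ pm, P x' z)| := by
    rw [← hsum1]; exact Finset.sum_le_sum fun z _ => key z
  rw [ha2] at hle
  linarith
end

section
/- Let N ≥ 1. Let A₁ be the set of unit vectors (cos(m·π/N), sin(m·π/N), 0) in ℝ³ and A₂ the set of unit vectors (cos(m·π/N), 0, sin(m·π/N)), for m ∈ {0, 1, …, 2N−1} (measurement directions in two orthogonal planes sharing the first coordinate axis). Then for every unit vector z ∈ ℝ³, max over α ∈ A₁ ∪ A₂ of |⟨α, z⟩| ≥ (1/√2)·cos(π/(2N)). -/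
lemma angle_lemma (N : ℕ) (hN : 1 ≤ N) (φ : ℝ) :
    ∃ m < 2*N, Real.cos (Real.pi/(2*N)) ≤ |Real.cos ((m:ℝ)*Real.pi/N - φ)| := by
  have hπ := Real.pi_pos
  have hNR : (0:ℝ) < N := by exact_mod_cast Nat.pos_of_ne_zero (by omega)
  set k : ℤ := round (N*φ/Real.pi) with hkdef
  have hk : |N*φ/Real.pi - k| ≤ 1/2 := abs_sub_round _
  have h2N : (0:ℤ) < 2*N := by positivity
  refine ⟨(k % (2*(N:ℤ))).toNat, ?_, ?_⟩
  · have h1 := Int.emod_nonneg k (ne_of_gt h2N)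
    have h2 := Int.emod_lt_of_pos k h2N
    omega
  · have h1 := Int.emod_nonneg k (ne_of_gt h2N)
    have hmk : ((k % (2*(N:ℤ))).toNat : ℤ) = k - 2*N*(k/(2*(N:ℤ))) := by
      rw [Int.toNat_of_nonneg h1, Int.emod_def]
    -- rewrite cos(mπ/N - φ) = cos(kπ/N - φ)
    have hcos : Real.cos (((k % (2*(N:ℤ))).toNat : ℝ)*Real.pi/N - φ)
        = Real.cos ((k:ℝ)*Real.pi/N - φ) := by
      have : (((k % (2*(N:ℤ))).toNat : ℤ) : ℝ) = (k:ℝ) - 2*N*((k/(2*(N:ℤ)) : ℤ):ℝ) := by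
        rw [hmk]; push_cast; ring
      push_cast at this ⊢
      rw [this]
      have : ((k:ℝ) - 2*N*((k/(2*(N:ℤ)) : ℤ):ℝ))*Real.pi/N - φ
          = ((k:ℝ)*Real.pi/N - φ) + (-(k/(2*(N:ℤ)) : ℤ) : ℤ)*(2*Real.pi) := by
        push_cast; field_simp; ring
      rw [this, Real.cos_add_int_mul_two_pi]
    rw [hcos]
    have habs : |(k:ℝ)*Real.pi/N - φ| ≤ Real.pi/(2*N) := by
      have : (k:ℝ)*Real.pi/N - φ = (Real.pi/N) * ((k:ℝ) - N*φ/Real.pi) := by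
        field_simp
      rw [this, abs_mul, abs_of_pos (by positivity)]
      have : |(k:ℝ) - N*φ/Real.pi| ≤ 1/2 := by rwa [abs_sub_comm]
      calc Real.pi/N * |(k:ℝ) - N*φ/Real.pi| ≤ Real.pi/N * (1/2) := by
            exact mul_le_mul_of_nonneg_left this (by positivity)
        _ = Real.pi/(2*N) := by ring
    calc Real.cos (Real.pi/(2*N)) ≤ Real.cos |(k:ℝ)*Real.pi/N - φ| := by
          apply Real.cos_le_cos_of_nonneg_of_le_pi (abs_nonneg _) ?_ habs
          have hN1 : (1:ℝ) ≤ N := by exact_mod_cast hN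
          calc Real.pi/(2*N) ≤ Real.pi/2 :=
                div_le_div_of_nonneg_left hπ.le two_pos (by linarith)
            _ ≤ Real.pi := by linarith
      _ = Real.cos ((k:ℝ)*Real.pi/N - φ) := Real.cos_abs _
      _ ≤ |Real.cos ((k:ℝ)*Real.pi/N - φ)| := le_abs_self _

lemma plane_lemma (N : ℕ) (hN : 1 ≤ N) (a b : ℝ) (hab : 1/2 ≤ a^2 + b^2) :
    ∃ m < 2*N, (1/Real.sqrt 2) * Real.cos (Real.pi/(2*N)) ≤
      |Real.cos ((m:ℝ)*Real.pi/N) * a + Real.sin ((m:ℝ)*Real.pi/N) * b| := by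
  set w : ℂ := ⟨a, b⟩ with hw
  have hw0 : w ≠ 0 := by
    intro h
    rw [Complex.ext_iff] at h
    simp only [Complex.zero_re, Complex.zero_im] at h
    rw [show a = 0 from h.1, show b = 0 from h.2] at hab; norm_num at hab
  set r : ℝ := ‖w‖ with hr
  have hr0 : 0 < r := norm_pos_iff.mpr hw0
  have ha : a = r * Real.cos (Complex.arg w) := by
    rw [Complex.cos_arg hw0]; field_simp; exact mul_comm _ _
  have hb : b = r * Real.sin (Complex.arg w) := by
    rw [Complex.sin_arg]; field_simp; exact mul_comm _ _
  have hrsq : r^2 = a^2 + b^2 := by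
    rw [hr, Complex.sq_norm, Complex.normSq_apply]; simp [hw]; ring
  have hrge : 1/Real.sqrt 2 ≤ r := by
    have h1 : (1/Real.sqrt 2)^2 = 1/2 := by
      rw [div_pow, Real.sq_sqrt (by norm_num)]; norm_num
    nlinarith [Real.sqrt_nonneg 2, Real.sq_sqrt (show (0:ℝ) ≤ 2 by norm_num),
      Real.sqrt_pos.mpr (show (0:ℝ) < 2 by norm_num)]
  obtain ⟨m, hm, hcos⟩ := angle_lemma N hN (Complex.arg w)
  refine ⟨m, hm, ?_⟩
  have heq : Real.cos ((m:ℝ)*Real.pi/N) * a + Real.sin ((m:ℝ)*Real.pi/N) * b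
      = r * Real.cos ((m:ℝ)*Real.pi/N - Complex.arg w) := by
    rw [ha, hb, Real.cos_sub]; ring
  rw [heq, abs_mul, abs_of_pos hr0]
  have hcosnn : 0 ≤ Real.cos (Real.pi/(2*N)) := by
    apply Real.cos_nonneg_of_mem_Icc
    constructor
    · have := Real.pi_pos
      have hNR : (0:ℝ) < N := by exact_mod_cast Nat.pos_of_ne_zero (by omega)
      have : 0 ≤ Real.pi/(2*(N:ℝ)) := by positivity
      linarith
    · have hN1 : (1:ℝ) ≤ N := by exact_mod_cast hN
      have := Real.pi_pos
      rw [div_le_div_iff₀ (by linarith) (by norm_num)]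
      nlinarith
  calc (1/Real.sqrt 2) * Real.cos (Real.pi/(2*N))
      ≤ r * Real.cos (Real.pi/(2*N)) := by
        exact mul_le_mul_of_nonneg_right hrge hcosnn
    _ ≤ r * |Real.cos ((m:ℝ)*Real.pi/N - Complex.arg w)| :=
        mul_le_mul_of_nonneg_left hcos hr0.le


/-- Consider the `2N` chained measurement directions
`(cos(m·π/N), sin(m·π/N), 0)` in the xy-plane and the `2N` directions
`(cos(m·π/N), 0, sin(m·π/N))` in the xz-plane, `m ∈ {0, …, 2N-1}`.  For every unit
vector `z = (z₀, z₁, z₂) ∈ ℝ³`, the maximum over all these directions `α` of the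
absolute standard inner product `|⟨α, z⟩|` is at least `(1/√2)·cos(π/(2N))`. -/
theorem statement15 (N : ℕ) (hN : 1 ≤ N) (z₀ z₁ z₂ : ℝ)
    (hz : z₀ ^ 2 + z₁ ^ 2 + z₂ ^ 2 = 1) :
    (1 / Real.sqrt 2) * Real.cos (Real.pi / (2 * N)) ≤
      (Finset.range (2 * N)).sup' (Finset.nonempty_range_iff.mpr (by omega))
        (fun m =>
          max |Real.cos (m * Real.pi / N) * z₀ + Real.sin (m * Real.pi / N) * z₁|
              |Real.cos (m * Real.pi / N) * z₀ + Real.sin (m * Real.pi / N) * z₂|) := by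
  have hcast : ((2*N : ℕ) : ℝ) = 2 * (N:ℝ) := by push_cast; ring
  rcases le_or_gt (1/2 : ℝ) (z₀^2 + z₁^2) with h | h
  · obtain ⟨m, hm, hle⟩ := plane_lemma N hN z₀ z₁ h
    refine le_trans ?_ (Finset.le_sup' _ (Finset.mem_range.mpr hm))
    exact hle.trans (le_max_left _ _)
  · have h2 : 1/2 ≤ z₀^2 + z₂^2 := by nlinarith
    obtain ⟨m, hm, hle⟩ := plane_lemma N hN z₀ z₂ h2
    refine le_trans ?_ (Finset.le_sup' _ (Finset.mem_range.mpr hm))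
    exact hle.trans (le_max_right _ _)
end
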